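/- Let D ⊊ ℝⁿ be a bounded domain with diameter d. Then ζ_D(x,y) ≤ 2·j'_D(x,y) for all x, y ∈ D, where ζ_D(x,y) = log(1 + d·|x−y| / min(η(x), η(y))) and j'_D(x,y) = (1/2)·log((1 + |x−y|/δ(x))·(1 + |x−y|/δ(y))). -/
import Mathlib


noncomputable def deltaD {n : ℕ} (D : Set (EuclideanSpace ℝ (Fin n)))
    (z : EuclideanSpace ℝ (Fin n)) : ℝ :=
  Metric.infDist z (frontier D)

noncomputable def etaD {n : ℕ} (D : Set (EuclideanSpace ℝ (Fin n)))
    (z : EuclideanSpace ℝ (Fin n)) : ℝ :=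
  deltaD D z * (Metric.diam D - deltaD D z)

noncomputable def zetaD {n : ℕ} (D : Set (EuclideanSpace ℝ (Fin n)))
    (x y : EuclideanSpace ℝ (Fin n)) : ℝ :=
  Real.log (1 + Metric.diam D * dist x y / min (etaD D x) (etaD D y))

noncomputable def zetaD' {n : ℕ} (D : Set (EuclideanSpace ℝ (Fin n)))
    (x y : EuclideanSpace ℝ (Fin n)) : ℝ :=
  (1 / 2) * Real.log ((1 + Metric.diam D * dist x y / etaD D x) *
    (1 + Metric.diam D * dist x y / etaD D y))

noncomputable def jD' {n : ℕ} (D : Set (EuclideanSpace ℝ (Fin n)))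
    (x y : EuclideanSpace ℝ (Fin n)) : ℝ :=
  (1 / 2) * Real.log ((1 + dist x y / deltaD D x) * (1 + dist x y / deltaD D y))


private lemma key_ineq (d t a b : ℝ) (ha : 0 < a) (hb : 0 < b) (had : 2*a ≤ d) (ht : 0 ≤ t)
    (hba : b ≤ a + t) :
    1 + d*t/(a*(d-a)) ≤ (1+t/a)*(1+t/b) := by
  have h1 : 0 < a*(d-a) := mul_pos ha (by linarith)
  have h2 : 0 < a*b := mul_pos ha hb
  have hda : (0:ℝ) ≤ d - a := by linarith
  have hd2a : (0:ℝ) ≤ d - 2*a := by linarith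
  have hatb : (0:ℝ) ≤ a + t - b := by linarith
  have hA : 0 ≤ t*(d-a)*(a+t-b) := by positivity
  have hB : 0 ≤ t*b*(d-2*a) := mul_nonneg (mul_nonneg ht hb.le) hd2a
  have hkey : d*t*(a*b) ≤ (t*b + t*a + t*t)*(a*(d-a)) := by
    nlinarith [mul_nonneg ha.le hA, mul_nonneg ha.le hB]
  have : d*t/(a*(d-a)) ≤ (t*b + t*a + t*t)/(a*b) := (div_le_div_iff₀ h1 h2).mpr hkey
  have heq : (1+t/a)*(1+t/b) = 1 + (t*b + t*a + t*t)/(a*b) := by field_simp; ring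
  rw [heq]; linarith

private lemma delta_bounds {n : ℕ} (hn : 2 ≤ n) (D : Set (EuclideanSpace ℝ (Fin n)))
    (hopen : IsOpen D) (hproper : D ≠ Set.univ)
    (hbdd : Bornology.IsBounded D) (x : EuclideanSpace ℝ (Fin n)) (hx : x ∈ D) :
    0 < Metric.infDist x (frontier D) ∧ 2 * Metric.infDist x (frontier D) ≤ Metric.diam D := by
  have hfr : (frontier D).Nonempty := nonempty_frontier_iff.mpr ⟨⟨x, hx⟩, hproper⟩
  have hxf : x ∉ frontier D := by
    rw [hopen.frontier_eq]; exact fun h => h.2 hx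
  have hpos : 0 < Metric.infDist x (frontier D) :=
    (isClosed_frontier.notMem_iff_infDist_pos hfr).mp hxf
  refine ⟨hpos, ?_⟩
  set δ := Metric.infDist x (frontier D)
  have hball : Metric.ball x δ ⊆ D := by
    have hpre : IsPreconnected (Metric.ball x δ) := (convex_ball x _).isPreconnected
    refine hpre.subset_left_of_subset_union hopen isClosed_closure.isOpen_compl
      (disjoint_compl_right.mono_left subset_closure) ?_ ⟨x, Metric.mem_ball_self hpos, hx⟩
    intro z hz
    by_cases hzc : z ∈ closure D
    · left
      have hzf : z ∉ frontier D := fun h => (Metric.disjoint_ball_infDist).le_bot ⟨hz, h⟩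
      rw [closure_eq_interior_union_frontier] at hzc
      rw [← hopen.interior_eq]
      exact hzc.resolve_right hzf
    · right; exact hzc
  -- 2δ ≤ diam via points x ± r • v
  have hnpos : 0 < n := by omega
  have v : EuclideanSpace ℝ (Fin n) := EuclideanSpace.single ⟨0, hnpos⟩ (1:ℝ)
  have hv : ‖EuclideanSpace.single (⟨0, hnpos⟩ : Fin n) (1:ℝ)‖ = 1 := by
    rw [EuclideanSpace.norm_single]; norm_num
  by_contra hlt
  push_neg at hlt
  obtain ⟨r, hr1, hr2⟩ : ∃ r, Metric.diam D / 2 < r ∧ r < δ :=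
    exists_between (by linarith)
  have hr0 : 0 ≤ r := le_trans (by positivity) hr1.le
  set v : EuclideanSpace ℝ (Fin n) := EuclideanSpace.single ⟨0, hnpos⟩ (1:ℝ) with hvdef
  have hmem : ∀ s : ℝ, |s| = r → x + s • v ∈ D := by
    intro s hs
    apply hball
    rw [Metric.mem_ball, dist_eq_norm]
    have : x + s • v - x = s • v := by abel
    rw [this, norm_smul, hvdef, hv, mul_one, Real.norm_eq_abs, hs]
    exact hr2
  have h1 : x + r • v ∈ D := hmem r (abs_of_nonneg hr0)
  have h2 : x + (-r) • v ∈ D := hmem (-r) (by rw [abs_neg, abs_of_nonneg hr0])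
  have hd : dist (x + r • v) (x + (-r) • v) = 2 * r := by
    rw [dist_eq_norm]
    have h3 : x + r • v - (x + (-r) • v) = (2*r) • v := by module
    rw [h3, norm_smul, hvdef, hv, mul_one, Real.norm_eq_abs,
      abs_of_nonneg (by linarith : (0:ℝ) ≤ 2*r)]
  have := Metric.dist_le_diam_of_mem hbdd h1 h2
  rw [hd] at this
  linarith


theorem stmt_11 {n : ℕ} (hn : 2 ≤ n) (D : Set (EuclideanSpace ℝ (Fin n)))
    (hopen : IsOpen D) (hconn : IsConnected D) (hproper : D ≠ Set.univ)
    (hbdd : Bornology.IsBounded D)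
    (x y : EuclideanSpace ℝ (Fin n)) (hx : x ∈ D) (hy : y ∈ D) :
    zetaD D x y ≤ 2 * jD' D x y := by
  obtain ⟨ha, had⟩ := delta_bounds hn D hopen hproper hbdd x hx
  obtain ⟨hb, hbd⟩ := delta_bounds hn D hopen hproper hbdd y hy
  set d := Metric.diam D with hd
  set t := dist x y with htdef
  set a := Metric.infDist x (frontier D) with hadef
  set b := Metric.infDist y (frontier D) with hbdef
  have ht : 0 ≤ t := dist_nonneg
  have hba : b ≤ a + t := by
    have := Metric.infDist_le_infDist_add_dist (x := y) (y := x) (s := frontier D)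
    rw [dist_comm] at this; exact this
  have hab : a ≤ b + t := Metric.infDist_le_infDist_add_dist
  have hax : etaD D x = a * (d - a) := rfl
  have hay : etaD D y = b * (d - b) := rfl
  have hpa : 0 < a * (d - a) := mul_pos ha (by linarith)
  have hpb : 0 < b * (d - b) := mul_pos hb (by linarith)
  have hprod : 0 < (1 + t/a) * (1 + t/b) := by positivity
  have hgoal : 2 * jD' D x y = Real.log ((1 + t/a) * (1 + t/b)) := by
    unfold jD' deltaD; rw [← hadef, ← hbdef, ← htdef]; ring
  rw [hgoal]
  unfold zetaD
  rw [hax, hay, ← hd, ← htdef]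
  rcases min_le_iff.mp (le_refl (min (a*(d-a)) (b*(d-b)))) with _ | _
  all_goals {
    rcases min_cases (a*(d-a)) (b*(d-b)) with ⟨hm, _⟩ | ⟨hm, _⟩
    · rw [hm]
      apply Real.log_le_log (by positivity)
      exact key_ineq d t a b ha hb had ht hba
    · rw [hm]
      apply Real.log_le_log (by positivity)
      rw [mul_comm (1 + t/a)]
      exact key_ineq d t b a hb ha hbd ht hab
  }
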